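/- If λ ∈ ℂ is a root of p_n(x) = x^n − ∑_{k=0}^{n−1} x^k with |λ| = 1, then from λ^{n}(λ−2) = −1 (valid since (λ−1)p_n(λ) = λ^{n+1} − 2λ^n + 1 and λ ≠ 1) it follows that |λ − 2| = 1, hence λ = 1, a contradiction; therefore p_n has no roots on the unit circle. -/

import Mathlib

theorem stmt_16 (n : ℕ) (hn : 2 ≤ n) (lam : ℂ)
    (hroot : lam ^ n - ∑ k ∈ Finset.range n, lam ^ k = 0) :
    ‖lam‖ ≠ 1 := by
  intro habs
  have hne1 : lam ≠ 1 := by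
    rintro rfl
    simp at hroot
    have : (n : ℂ) = 1 := by linear_combination -hroot
    have : n = 1 := by exact_mod_cast this
    omega
  have hsum : lam ^ n = ∑ k ∈ Finset.range n, lam ^ k := by
    linear_combination hroot
  have hgeom : (lam - 1) * ∑ k ∈ Finset.range n, lam ^ k = lam ^ n - 1 := by
    rw [mul_comm]; exact geom_sum_mul lam n
  have key : lam ^ n * (lam - 2) = -1 := by
    have := hgeom
    rw [← hsum] at this
    ring_nf at this ⊢
    linear_combination this
  have h1 : ‖lam - 2‖ = 1 := by
    have := congrArg (‖·‖) key
    rw [norm_mul, norm_pow, habs, one_pow, one_mul] at this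
    simpa using this
  -- from |lam| = 1 and |lam - 2| = 1 deduce lam = 1
  have hre : lam.re = 1 ∧ lam.im = 0 := by
    have e1 : lam.re ^ 2 + lam.im ^ 2 = 1 := by
      have h := Complex.sq_norm lam
      rw [habs] at h
      simp [Complex.normSq_apply, sq] at h ⊢
      linarith
    have e2 : (lam.re - 2) ^ 2 + lam.im ^ 2 = 1 := by
      have := congrArg (· ^ 2) h1
      simp only [Complex.sq_norm, Complex.normSq_apply] at this
      have hre2 : (lam - 2).re = lam.re - 2 := by simp
      have him2 : (lam - 2).im = lam.im := by simp
      rw [hre2, him2] at this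
      nlinarith [this]
    constructor
    · nlinarith
    · nlinarith
  exact hne1 (Complex.ext hre.1 (by simp [hre.2]))
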